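/- Let Q ∈ 𝕊₊ⁿ and S ∈ 𝕊₊ⁿ, and let {xᵗ}, {yᵗ} be generated by the Nesterov iteration without restart: x⁰ = y¹, α₁ = 1, α_{t+1} = (1+√(1+4α_t²))/2, Qxᵗ − b + S(xᵗ − yᵗ) = 0, y^{t+1} = xᵗ + ((α_t−1)/α_{t+1})(xᵗ − x^{t−1}). Then for all t ≥ 1, f(xᵗ) ≤ f(x⁰). -/

import Mathlib

open Matrix

lemma dp_symm' {n : ℕ} (A : Matrix (Fin n) (Fin n) ℝ) (hA : Aᵀ = A) (u v : Fin n → ℝ) :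
    u ⬝ᵥ A *ᵥ v = v ⬝ᵥ A *ᵥ u := by
  rw [dotProduct_mulVec, ← hA, vecMul_transpose, hA, dotProduct_comm]

lemma key_id' {n : ℕ} (Q S : Matrix (Fin n) (Fin n) ℝ) (b : Fin n → ℝ)
    (hQ : Qᵀ = Q) (hS : Sᵀ = S) (x y z : Fin n → ℝ)
    (hopt : Q *ᵥ x - b + S *ᵥ (x - y) = 0) :
    (1/2) * (x ⬝ᵥ Q *ᵥ x) - b ⬝ᵥ x + (1/2) * ((x - y) ⬝ᵥ S *ᵥ (x - y))
      + (1/2) * ((z - x) ⬝ᵥ Q *ᵥ (z - x)) + (1/2) * ((z - x) ⬝ᵥ S *ᵥ (z - x))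
    = (1/2) * (z ⬝ᵥ Q *ᵥ z) - b ⬝ᵥ z + (1/2) * ((z - y) ⬝ᵥ S *ᵥ (z - y)) := by
  have h0 : (z - x) ⬝ᵥ (Q *ᵥ x - b + S *ᵥ (x - y)) = 0 := by rw [hopt]; simp
  have hq := dp_symm' Q hQ z x
  have hsxy := dp_symm' S hS z x
  have hszy := dp_symm' S hS z y
  have hsxy2 := dp_symm' S hS x y
  have hbz := dotProduct_comm z b
  have hbx := dotProduct_comm x b
  simp only [Matrix.mulVec_sub, dotProduct_sub, sub_dotProduct, dotProduct_add] at h0 ⊢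
  ring_nf at h0 ⊢
  linarith

lemma q_smul' {n : ℕ} (S : Matrix (Fin n) (Fin n) ℝ) (c : ℝ) (v : Fin n → ℝ) :
    (c • v) ⬝ᵥ S *ᵥ (c • v) = c ^ 2 * (v ⬝ᵥ S *ᵥ v) := by
  simp [smul_dotProduct, Matrix.mulVec_smul, dotProduct_smul, smul_eq_mul]; ring

theorem nesterov_no_restart_descent {n : ℕ}
    (Q S : Matrix (Fin n) (Fin n) ℝ) (b : Fin n → ℝ)
    (hQ : Q.PosSemidef) (hS : S.PosSemidef)
    (f : (Fin n → ℝ) → ℝ)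
    (hf : ∀ x, f x = (1 / 2) * (x ⬝ᵥ Q *ᵥ x) - b ⬝ᵥ x)
    (x y : ℕ → (Fin n → ℝ)) (α : ℕ → ℝ)
    (hα1 : α 1 = 1)
    (hαrec : ∀ t, 1 ≤ t → α (t + 1) = (1 + Real.sqrt (1 + 4 * (α t) ^ 2)) / 2)
    (hx0 : x 0 = y 1)
    (hopt : ∀ t, 1 ≤ t → Q *ᵥ x t - b + S *ᵥ (x t - y t) = 0)
    (hy : ∀ t, 1 ≤ t →
      y (t + 1) = x t + ((α t - 1) / α (t + 1)) • (x t - x (t - 1))) :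
    ∀ t, 1 ≤ t → f (x t) ≤ f (x 0) := by
  have hQsym : Qᵀ = Q := hQ.1
  have hSsym : Sᵀ = S := hS.1
  have hQpos : ∀ v : Fin n → ℝ, 0 ≤ v ⬝ᵥ Q *ᵥ v := fun v => by simpa using hQ.dotProduct_mulVec_nonneg v
  have hSpos : ∀ v : Fin n → ℝ, 0 ≤ v ⬝ᵥ S *ᵥ v := fun v => by simpa using hS.dotProduct_mulVec_nonneg v
  -- α t ≥ 1 for t ≥ 1
  have hαge : ∀ t, 1 ≤ t → 1 ≤ α t := by
    intro t ht
    induction t, ht using Nat.le_induction with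
    | base => rw [hα1]
    | succ t ht ih =>
      rw [hαrec t ht]
      have h1 : (1:ℝ) ≤ Real.sqrt (1 + 4 * α t ^ 2) := by
        nlinarith [Real.sq_sqrt (show (0:ℝ) ≤ 1 + 4 * α t ^ 2 by positivity),
          Real.sqrt_nonneg (1 + 4 * α t ^ 2), sq_nonneg (α t)]
      linarith
  -- ratio bound
  have hratio : ∀ t, 1 ≤ t → ((α t - 1) / α (t + 1)) ^ 2 ≤ 1 := by
    intro t ht
    have ha := hαge t ht
    have hA : α t - 1 < α (t + 1) := by
      rw [hαrec t ht]
      have h2 : 2 * α t ≤ Real.sqrt (1 + 4 * α t ^ 2) := by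
        nlinarith [Real.sq_sqrt (show (0:ℝ) ≤ 1 + 4 * α t ^ 2 by positivity),
          Real.sqrt_nonneg (1 + 4 * α t ^ 2),
          sq_nonneg (Real.sqrt (1 + 4 * α t ^ 2) - 2 * α t)]
      linarith
    have hApos : 0 < α (t + 1) := by linarith
    have h1 : 0 ≤ (α t - 1) / α (t + 1) := div_nonneg (by linarith) hApos.le
    have h2 : (α t - 1) / α (t + 1) ≤ 1 := by
      rw [div_le_one hApos]; linarith
    nlinarith
  -- main invariant
  have main : ∀ t, 1 ≤ t →
      f (x t) + (1/2) * ((x (t-1) - x t) ⬝ᵥ S *ᵥ (x (t-1) - x t)) ≤ f (x 0) := by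
    intro t ht
    induction t, ht using Nat.le_induction with
    | base =>
      have hk := key_id' Q S b hQsym hSsym (x 1) (y 1) (x 0) (hopt 1 le_rfl)
      have h0 : x 0 - y 1 = 0 := by rw [hx0]; simp
      rw [h0] at hk
      simp only [Matrix.mulVec_zero, dotProduct_zero, mul_zero, add_zero] at hk
      have h1 := hQpos (x 0 - x 1)
      have h2 := hSpos (x 1 - y 1)
      simp only [hf, Nat.sub_self]
      linarith
    | succ t ht ih =>
      have hk := key_id' Q S b hQsym hSsym (x (t+1)) (y (t+1)) (x t)
        (hopt (t+1) (by omega))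
      have hyy : x t - y (t + 1) = (-((α t - 1) / α (t + 1))) • (x t - x (t - 1)) := by
        rw [hy t ht]; module
      rw [hyy, q_smul'] at hk
      have hb2 : (-((α t - 1) / α (t + 1))) ^ 2 ≤ 1 := by
        rw [neg_pow]; simpa using hratio t ht
      have h1 := hQpos (x t - x (t+1))
      have h2 := hSpos (x (t+1) - y (t+1))
      have h3 := hSpos (x t - x (t-1))
      have hflip : (x (t-1) - x t) ⬝ᵥ S *ᵥ (x (t-1) - x t)
          = (x t - x (t-1)) ⬝ᵥ S *ᵥ (x t - x (t-1)) := by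
        rw [show x (t-1) - x t = -(x t - x (t-1)) from (neg_sub _ _).symm]
        simp only [Matrix.mulVec_neg, dotProduct_neg, neg_dotProduct, neg_neg]
      simp only [hf] at ih ⊢
      rw [hflip] at ih
      simp only [Nat.add_sub_cancel]
      nlinarith [mul_le_of_le_one_left h3 hb2]
  intro t ht
  have := main t ht
  have := hSpos (x (t-1) - x t)
  linarith
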